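/- Let p be a prime and let A = (A,·,∘) be a finite skew brace whose order is a power of p, and suppose the homomorphism λ is non-trivial (i.e., λ_a ≠ id for some a ∈ A). Then there exists a ∈ A with λ_a ≠ id such that λ_{λ_a(b)} = λ_a ∘ λ_b ∘ λ_a⁻¹ for all b ∈ A; consequently λ_a is a non-identity element of Aut(A). -/

import Mathlib

/-- A skew brace structure on a group `A` (whose given group operation `*` plays the
role of the "additive" operation `·`): a second group operation `circ` with the same
identity element `1`, satisfying the brace relation
`a ∘ (b · c) = (a ∘ b) · a⁻¹ · (a ∘ c)`. -/
structure SkewBraceStruct (A : Type*) [Group A] where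
  circ : A → A → A
  circInv : A → A
  circ_assoc : ∀ a b c, circ (circ a b) c = circ a (circ b c)
  one_circ : ∀ a, circ 1 a = a
  circ_one : ∀ a, circ a 1 = a
  circInv_circ : ∀ a, circ (circInv a) a = 1
  brace : ∀ a b c, circ a (b * c) = circ a b * a⁻¹ * circ a c

/-- `f` is an automorphism of the skew brace: a bijection that is an automorphism of
both `(A, ·)` and `(A, ∘)`. -/
def SkewBraceStruct.IsAut {A : Type*} [Group A] (S : SkewBraceStruct A) (f : A → A) : Prop :=
  Function.Bijective f ∧ (∀ a b, f (a * b) = f a * f b) ∧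
    (∀ a b, f (S.circ a b) = S.circ (f a) (f b))


/-- The map `λ_a : b ↦ a⁻¹ · (a ∘ b)`. -/
def SkewBraceStruct.lam {A : Type*} [Group A] (S : SkewBraceStruct A) (a b : A) : A :=
  a⁻¹ * S.circ a b

/-- The map `ρ_a : b ↦ (a ∘ b) · a⁻¹`. -/
def SkewBraceStruct.rho {A : Type*} [Group A] (S : SkewBraceStruct A) (a b : A) : A :=
  S.circ a b * a⁻¹

namespace SkewBraceStruct

variable {A : Type*} [Group A] (S : SkewBraceStruct A)

theorem circ_circInv (a : A) : S.circ a (S.circInv a) = 1 := by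
  have h1 : S.circ (S.circInv (S.circInv a)) (S.circInv a) = 1 := S.circInv_circ _
  calc S.circ a (S.circInv a)
      = S.circ 1 (S.circ a (S.circInv a)) := (S.one_circ _).symm
    _ = S.circ (S.circ (S.circInv (S.circInv a)) (S.circInv a)) (S.circ a (S.circInv a)) := by
        rw [h1]
    _ = S.circ (S.circInv (S.circInv a))
          (S.circ (S.circ (S.circInv a) a) (S.circInv a)) := by
        rw [S.circ_assoc, ← S.circ_assoc (S.circInv a) a]
    _ = 1 := by rw [S.circInv_circ, S.one_circ, h1]

theorem circ_eq (a b : A) : S.circ a b = a * S.lam a b := by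
  simp [lam]

theorem lam_one (a : A) : S.lam a 1 = 1 := by
  simp [lam, S.circ_one]

theorem lam_one_left (b : A) : S.lam 1 b = b := by
  simp [lam, S.one_circ]

theorem lam_mul (a b c : A) : S.lam a (b * c) = S.lam a b * S.lam a c := by
  simp [lam, S.brace]; group

theorem lam_inv (a b : A) : S.lam a b⁻¹ = (S.lam a b)⁻¹ := by
  have := S.lam_mul a b b⁻¹
  rw [mul_inv_cancel, S.lam_one] at this
  exact eq_inv_of_mul_eq_one_right this.symm

theorem lam_circ (a b c : A) : S.lam (S.circ a b) c = S.lam a (S.lam b c) := by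
  have h1 : S.lam a (S.lam b c) = S.lam a b⁻¹ * a⁻¹ * S.circ a (S.circ b c) := by
    simp only [lam, S.brace]; group
  rw [h1, S.lam_inv, ← S.circ_assoc]
  show S.lam (S.circ a b) c = (S.lam a b)⁻¹ * a⁻¹ * S.circ (S.circ a b) c
  rw [show (S.lam a b)⁻¹ * a⁻¹ = (a * S.lam a b)⁻¹ by group, ← S.circ_eq]
  rfl

theorem lam_lam_circInv (a b : A) : S.lam (S.circInv a) (S.lam a b) = b := by
  rw [← S.lam_circ, S.circInv_circ, S.lam_one_left]

theorem lam_circInv_lam (a b : A) : S.lam a (S.lam (S.circInv a) b) = b := by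
  rw [← S.lam_circ, S.circ_circInv, S.lam_one_left]

end SkewBraceStruct

def SkewBraceStruct.lamE {A : Type*} [Group A] (S : SkewBraceStruct A) (a : A) : Equiv.Perm A :=
  ⟨S.lam a, S.lam (S.circInv a), fun b => S.lam_lam_circInv a b, fun b => S.lam_circInv_lam a b⟩

@[simp] theorem SkewBraceStruct.lamE_apply {A : Type*} [Group A] (S : SkewBraceStruct A)
    (a b : A) : S.lamE a b = S.lam a b := rfl

/-- The holomorph-style group `A ⋊_λ (A,∘)` attached to a skew brace. -/
structure SBHol {A : Type*} [Group A] (S : SkewBraceStruct A) where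
  fst : A
  snd : A

namespace SBHol

variable {A : Type*} [Group A] {S : SkewBraceStruct A}

/-- Multiplication on `SBHol S`. -/
def hmul (p q : SBHol S) : SBHol S := ⟨p.fst * S.lam p.snd q.fst, S.circ p.snd q.snd⟩

/-- Inversion on `SBHol S`. -/
def hinv (p : SBHol S) : SBHol S := ⟨S.lam (S.circInv p.snd) p.fst⁻¹, S.circInv p.snd⟩

instance : Group (SBHol S) where
  mul := hmul
  one := ⟨1, 1⟩
  inv := hinv
  mul_assoc p q r := by
    show hmul (hmul p q) r = hmul p (hmul q r)
    simp only [hmul, SBHol.mk.injEq]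
    refine ⟨?_, (S.circ_assoc _ _ _)⟩
    rw [S.lam_circ, S.lam_mul, mul_assoc]
  one_mul p := by
    show hmul ⟨1, 1⟩ p = p
    simp only [hmul, S.lam_one_left, S.one_circ, one_mul]
  mul_one p := by
    show hmul p ⟨1, 1⟩ = p
    simp only [hmul, S.lam_one, S.circ_one, mul_one]
  inv_mul_cancel p := by
    show hmul (hinv p) p = (⟨1, 1⟩ : SBHol S)
    simp only [hmul, hinv, SBHol.mk.injEq]
    constructor
    · rw [← S.lam_mul, inv_mul_cancel, S.lam_one]
    · rw [S.circInv_circ]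

@[simp] theorem mul_fst (p q : SBHol S) : (p * q).fst = p.fst * S.lam p.snd q.fst := rfl
@[simp] theorem mul_snd (p q : SBHol S) : (p * q).snd = S.circ p.snd q.snd := rfl
@[simp] theorem inv_fst (p : SBHol S) : (p⁻¹).fst = S.lam (S.circInv p.snd) p.fst⁻¹ := rfl
@[simp] theorem inv_snd (p : SBHol S) : (p⁻¹).snd = S.circInv p.snd := rfl
@[simp] theorem one_fst : (1 : SBHol S).fst = 1 := rfl
@[simp] theorem one_snd : (1 : SBHol S).snd = 1 := rfl

/-- `SBHol S` is in bijection with `A × A`. -/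
def prodEquiv : A × A ≃ SBHol S where
  toFun p := ⟨p.1, p.2⟩
  invFun q := (q.fst, q.snd)
  left_inv _ := rfl
  right_inv _ := rfl

instance [Finite A] : Finite (SBHol S) := Finite.of_equiv _ (prodEquiv (S := S))

/-- The action of `SBHol S` on `A` by `(a, c) · x = a * λ_c x`. -/
def toPerm : SBHol S →* Equiv.Perm A where
  toFun q := Equiv.mulLeft q.fst * S.lamE q.snd
  map_one' := by
    ext x
    simp [S.lam_one_left]
  map_mul' p q := by
    ext x
    simp only [Equiv.Perm.mul_apply, Equiv.coe_mulLeft, SkewBraceStruct.lamE_apply,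
      mul_fst, mul_snd]
    rw [S.lam_circ, S.lam_mul, mul_assoc]

theorem toPerm_apply (q : SBHol S) (x : A) : (toPerm q) x = q.fst * S.lam q.snd x := rfl

end SBHol

/-- If `A` is a finite skew brace of `p`-power order with `λ` non-trivial, then there
exists `a ∈ A` with `λ_a ≠ id` such that `λ_{λ_a(b)} = λ_a ∘ λ_b ∘ λ_a⁻¹` for all `b`;
consequently `λ_a` is a non-identity element of `Aut(A)`. -/
theorem ppower_lam_nontrivial_aut {A : Type*} [Group A] [Finite A] (S : SkewBraceStruct A)
    (p : ℕ) (hp : p.Prime) (hcard : ∃ n : ℕ, Nat.card A = p ^ n)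
    (hlam : ∃ a : A, S.lam a ≠ id) :
    ∃ a : A, S.lam a ≠ id ∧
      (∀ b, S.lam (S.lam a b) = S.lam a ∘ S.lam b ∘ Function.invFun (S.lam a)) ∧
      S.IsAut (S.lam a) := by
  haveI : Fact p.Prime := ⟨hp⟩
  obtain ⟨n, hn⟩ := hcard
  obtain ⟨a₀, ha₀⟩ := hlam
  set φ : SBHol S →* Equiv.Perm A := SBHol.toPerm with hφ
  set P : Subgroup (Equiv.Perm A) := φ.range with hPdef
  -- P is a p-group
  have hcardP : ∃ m, Nat.card P = p ^ m := by
    have hdvd : Nat.card P ∣ Nat.card (SBHol S) := by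
      have := Subgroup.card_dvd_of_surjective φ.rangeRestrict φ.rangeRestrict_surjective
      exact this
    have hcardH : Nat.card (SBHol S) = p ^ (n + n) := by
      rw [← Nat.card_congr (SBHol.prodEquiv (S := S)), Nat.card_prod, hn, pow_add]
    rw [hcardH] at hdvd
    obtain ⟨m, _, hm⟩ := (Nat.dvd_prime_pow hp).mp hdvd
    exact ⟨m, hm⟩
  obtain ⟨m, hm⟩ := hcardP
  have hPp : IsPGroup p P := IsPGroup.of_card hm
  -- the subgroup D ≤ P of circle-translations
  set D : Subgroup P := {
    carrier := {f | ∃ a, ∀ x, (f : Equiv.Perm A) x = S.circ a x}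
    mul_mem' := by
      rintro f g ⟨a, ha⟩ ⟨b, hb⟩
      refine ⟨S.circ a b, fun x => ?_⟩
      have h1 : ((f * g : P) : Equiv.Perm A) x = (f : Equiv.Perm A) ((g : Equiv.Perm A) x) := rfl
      rw [h1, hb, ha, S.circ_assoc]
    one_mem' := ⟨1, fun x => by
      have : (((1 : P) : Equiv.Perm A)) x = x := rfl
      rw [this, S.one_circ]⟩
    inv_mem' := by
      rintro f ⟨a, ha⟩
      refine ⟨S.circInv a, fun x => ?_⟩
      have key : (f : Equiv.Perm A) (S.circ (S.circInv a) x) = x := by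
        rw [ha, ← S.circ_assoc, S.circ_circInv, S.one_circ]
      have h2 : ((f⁻¹ : P) : Equiv.Perm A) = (f : Equiv.Perm A)⁻¹ := rfl
      rw [h2]
      calc (f : Equiv.Perm A)⁻¹ x
          = (f : Equiv.Perm A)⁻¹ ((f : Equiv.Perm A) (S.circ (S.circInv a) x)) := by rw [key]
        _ = S.circ (S.circInv a) x := Equiv.symm_apply_apply _ _ } with hDdef
  -- D is a proper subgroup
  have hDtop : D ≠ ⊤ := by
    intro htop
    have ht₀ : (⟨φ ⟨1, a₀⟩, ⟨⟨1, a₀⟩, rfl⟩⟩ : P) ∈ D := htop ▸ Subgroup.mem_top _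
    obtain ⟨a, ha⟩ := ht₀
    have ha' : ∀ x, S.lam a₀ x = S.circ a x := by
      intro x
      have hx := ha x
      rwa [show ((⟨φ ⟨1, a₀⟩, ⟨⟨1, a₀⟩, rfl⟩⟩ : P) : Equiv.Perm A) x = 1 * S.lam a₀ x from rfl,
        one_mul] at hx
    have ha1 : a = 1 := by
      have h1 := ha' 1
      rwa [S.lam_one, S.circ_one, eq_comm] at h1
    apply ha₀
    funext x
    rw [id, ha' x, ha1, S.one_circ]
  -- normalizer condition in the p-group P
  haveI : Group.IsNilpotent P := hPp.isNilpotent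
  have hNC : NormalizerCondition P := normalizerCondition_of_isNilpotent (G := ↥P)
  have hlt : D < Subgroup.normalizer (D : Set P) := hNC D (lt_top_iff_ne_top.mpr hDtop)
  obtain ⟨x, hxn, hxD⟩ := SetLike.exists_of_lt hlt
  obtain ⟨⟨b, c⟩, hbc⟩ := x.2
  -- the circle-translation by b, and h := d⁻¹ * x
  set d : P := ⟨φ ⟨b, b⟩, ⟨⟨b, b⟩, rfl⟩⟩ with hd_def
  have hdD : d ∈ D := ⟨b, fun z => by
    rw [show ((d : P) : Equiv.Perm A) z = b * S.lam b z from rfl, ← S.circ_eq]⟩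
  set h : P := d⁻¹ * x with hh_def
  have hhn : h ∈ Subgroup.normalizer (D : Set P) :=
    mul_mem (inv_mem (Subgroup.le_normalizer hdD)) hxn
  have hhD : h ∉ D := by
    intro hcon
    refine hxD ?_
    have hx : x = d * h := by rw [hh_def]; group
    rw [hx]; exact mul_mem hdD hcon
  set e : A := S.circ (S.circInv b) c with he_def
  have hhol : (⟨b, b⟩ : SBHol S)⁻¹ * ⟨b, c⟩ = ⟨1, e⟩ := by
    have h1 : ((⟨b, b⟩ : SBHol S)⁻¹ * ⟨b, c⟩).fst = 1 := by
      simp only [SBHol.mul_fst, SBHol.inv_fst, SBHol.inv_snd, ← S.lam_mul, inv_mul_cancel,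
        S.lam_one]
    have h2 : ((⟨b, b⟩ : SBHol S)⁻¹ * ⟨b, c⟩).snd = e := by
      simp only [SBHol.mul_snd, SBHol.inv_snd, he_def]
    cases hmk : (⟨b, b⟩ : SBHol S)⁻¹ * ⟨b, c⟩ with
    | mk u v => rw [hmk] at h1 h2; simp at h1 h2; rw [h1, h2]
  have hhperm : ((h : P) : Equiv.Perm A) = φ ⟨1, e⟩ := by
    have h1 : ((h : P) : Equiv.Perm A) = (φ ⟨b, b⟩)⁻¹ * φ ⟨b, c⟩ := by
      rw [hh_def]
      rw [show ((d⁻¹ * x : P) : Equiv.Perm A) = ((d : P) : Equiv.Perm A)⁻¹ * (x : Equiv.Perm A)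
        from rfl]
      rw [hbc]
    rw [h1, ← map_inv, ← map_mul, hhol]
  have hlam_e : ∀ z, ((h : P) : Equiv.Perm A) z = S.lam e z := by
    intro z
    rw [hhperm, SBHol.toPerm_apply, one_mul]
  -- λ_e ≠ id
  have hene : S.lam e ≠ id := by
    intro hid
    apply hhD
    have h1 : h = 1 := by
      apply Subtype.ext
      apply Equiv.ext
      intro z
      rw [hlam_e z, hid]
      rfl
    rw [h1]
    exact one_mem D
  -- λ_e is a circle-automorphism
  have hcirc : ∀ t w, S.lam e (S.circ t w) = S.circ (S.lam e t) (S.lam e w) := by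
    intro t w
    have hdtD : (⟨φ ⟨t, t⟩, ⟨⟨t, t⟩, rfl⟩⟩ : P) ∈ D := ⟨t, fun z => by
      rw [show (((⟨φ ⟨t, t⟩, ⟨⟨t, t⟩, rfl⟩⟩ : P) : P) : Equiv.Perm A) z = t * S.lam t z from rfl,
        ← S.circ_eq]⟩
    set dt : P := ⟨φ ⟨t, t⟩, ⟨⟨t, t⟩, rfl⟩⟩ with hdt_def
    have hconj : h * dt * h⁻¹ ∈ D := (Subgroup.mem_normalizer_iff.mp hhn dt).mp hdtD
    obtain ⟨s, hs⟩ := hconj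
    have heval : ∀ z, S.lam e (S.circ t (S.lam (S.circInv e) z)) = S.circ s z := by
      intro z
      have h1 : ((h * dt * h⁻¹ : P) : Equiv.Perm A) z
          = ((h : P) : Equiv.Perm A) (((dt : P) : Equiv.Perm A)
            (((h : P) : Equiv.Perm A)⁻¹ z)) := rfl
      have h2 : ((h : P) : Equiv.Perm A)⁻¹ z = S.lam (S.circInv e) z := by
        have h3 : ((h : P) : Equiv.Perm A) (S.lam (S.circInv e) z) = z := by
          rw [hlam_e, S.lam_circInv_lam]
        calc ((h : P) : Equiv.Perm A)⁻¹ z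
            = ((h : P) : Equiv.Perm A)⁻¹ (((h : P) : Equiv.Perm A)
              (S.lam (S.circInv e) z)) := by rw [h3]
          _ = S.lam (S.circInv e) z := Equiv.symm_apply_apply _ _
      have h4 : ((dt : P) : Equiv.Perm A) (S.lam (S.circInv e) z)
          = S.circ t (S.lam (S.circInv e) z) := by
        rw [show ((dt : P) : Equiv.Perm A) (S.lam (S.circInv e) z)
          = t * S.lam t (S.lam (S.circInv e) z) from rfl, ← S.circ_eq]
      have h5 := hs z
      rw [h1, h2, h4, hlam_e] at h5
      exact h5
    have hse : s = S.lam e t := by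
      have h6 := heval (S.lam e 1)
      rw [S.lam_lam_circInv, S.circ_one, S.lam_one, S.circ_one] at h6
      exact h6.symm
    have h7 := heval (S.lam e w)
    rw [S.lam_lam_circInv, hse] at h7
    exact h7
  -- conjugation identity
  have hconj_id : ∀ t w, S.lam (S.lam e t) (S.lam e w) = S.lam e (S.lam t w) := by
    intro t w
    have h1 := hcirc t w
    rw [S.circ_eq t w, S.lam_mul, S.circ_eq (S.lam e t) (S.lam e w)] at h1
    exact (mul_left_cancel h1).symm
  have hbij : Function.Bijective (S.lam e) := (S.lamE e).bijective
  have hri : ∀ z, S.lam e (Function.invFun (S.lam e) z) = z :=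
    Function.rightInverse_invFun hbij.2
  refine ⟨e, hene, ?_, hbij, fun t w => S.lam_mul e t w, hcirc⟩
  intro t
  funext z
  show S.lam (S.lam e t) z = S.lam e (S.lam t (Function.invFun (S.lam e) z))
  calc S.lam (S.lam e t) z
      = S.lam (S.lam e t) (S.lam e (Function.invFun (S.lam e) z)) := by rw [hri]
    _ = S.lam e (S.lam t (Function.invFun (S.lam e) z)) := hconj_id _ _
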